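/- Let F : ℝ^n ⇉ ℝ^m be a set-valued mapping, (x̄, ȳ) ∈ gph F, and suppose there exist κ > 0 and a neighborhood U of x̄ with d(x, F⁻¹(ȳ)) ≤ κ·d(ȳ, F(x)) for all x ∈ U, and moreover x̄ is an isolated point of F⁻¹(ȳ). Then the graphical derivative satisfies DF(x̄|ȳ)⁻¹(0) = {0}; that is, if (w, 0) belongs to the tangent cone to gph F at (x̄, ȳ), then w = 0. -/

import Mathlib

open Filter

/-- The Bouligand (contingent) tangent cone to a set `s` at a point `p`. -/
def contingentCone {F : Type*} [NormedAddCommGroup F] [NormedSpace ℝ F]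
    (s : Set F) (p : F) : Set F :=
  {v | ∃ t : ℕ → ℝ, ∃ w : ℕ → F, (∀ k, 0 < t k) ∧ Tendsto t atTop (nhds 0) ∧
    Tendsto w atTop (nhds v) ∧ ∀ k, p + t k • w k ∈ s}

/-- One direction of the Levy–Rockafellar criterion: if `F` is metrically subregular at
`xb` for `yb` and `xb` is an isolated point of `F⁻¹(yb)`, then `DF(xb|yb)⁻¹(0) = {0}`. -/
theorem stmt6 {n m : ℕ}
    (F : EuclideanSpace ℝ (Fin n) → Set (EuclideanSpace ℝ (Fin m)))
    (xb : EuclideanSpace ℝ (Fin n)) (yb : EuclideanSpace ℝ (Fin m))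
    (hgph : yb ∈ F xb)
    (κ : ℝ) (hκ : 0 < κ)
    (U : Set (EuclideanSpace ℝ (Fin n))) (hU : U ∈ nhds xb)
    (hsubreg : ∀ x ∈ U, EMetric.infEdist x {u | yb ∈ F u} ≤
      ENNReal.ofReal κ * EMetric.infEdist yb (F x))
    (hisolated : ∃ V ∈ nhds xb, ∀ x ∈ V, yb ∈ F x → x = xb) :
    ∀ w : EuclideanSpace ℝ (Fin n),
      (w, (0 : EuclideanSpace ℝ (Fin m))) ∈
        contingentCone {p : EuclideanSpace ℝ (Fin n) × EuclideanSpace ℝ (Fin m) |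
          p.2 ∈ F p.1} (xb, yb) → w = 0 := by
  rintro w ⟨t, p, ht, htlim, hplim, hmem⟩
  obtain ⟨V, hV, hVx⟩ := hisolated
  obtain ⟨r, hr, hball⟩ := Metric.mem_nhds_iff.1 (Filter.inter_mem hU hV)
  set u : ℕ → EuclideanSpace ℝ (Fin n) := fun k => (p k).1 with hu_def
  set v : ℕ → EuclideanSpace ℝ (Fin m) := fun k => (p k).2 with hv_def
  have hu : Tendsto u atTop (nhds w) := (continuous_fst.tendsto _).comp hplim
  have hv : Tendsto v atTop (nhds 0) := (continuous_snd.tendsto _).comp hplim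
  have hmem' : ∀ k, yb + t k • v k ∈ F (xb + t k • u k) := fun k => hmem k
  have ha : Tendsto (fun k => t k * ‖u k‖) atTop (nhds 0) := by
    have := htlim.mul hu.norm
    simpa using this
  have hev : ∀ᶠ k in atTop, t k * ‖u k‖ < r / 2 :=
    ha.eventually_lt_const (by positivity)
  have key : ∀ᶠ k in atTop, ‖u k‖ ≤ κ * ‖v k‖ := by
    filter_upwards [hev] with k hk
    have htk := ht k
    have hnorm : ‖t k • u k‖ = t k * ‖u k‖ := by
      rw [norm_smul, Real.norm_eq_abs, abs_of_pos htk]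
    have hxball : xb + t k • u k ∈ Metric.ball xb r := by
      rw [Metric.mem_ball, dist_eq_norm]
      simpa [hnorm] using lt_trans hk (by linarith)
    have hxU : xb + t k • u k ∈ U := (hball hxball).1
    -- upper bound on RHS
    have hub : EMetric.infEdist yb (F (xb + t k • u k)) ≤
        ENNReal.ofReal (t k * ‖v k‖) := by
      calc EMetric.infEdist yb (F (xb + t k • u k))
          ≤ edist yb (yb + t k • v k) := EMetric.infEdist_le_edist_of_mem (hmem' k)
        _ = ENNReal.ofReal (t k * ‖v k‖) := by
            rw [edist_dist, dist_eq_norm]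
            simp [norm_smul, Real.norm_eq_abs, abs_of_pos htk]
    -- lower bound on LHS
    have hlb : ENNReal.ofReal (t k * ‖u k‖) ≤
        EMetric.infEdist (xb + t k • u k) {u | yb ∈ F u} := by
      refine EMetric.le_infEdist.2 ?_
      intro z hz
      rw [edist_dist]
      apply ENNReal.ofReal_le_ofReal
      by_cases hzV : z ∈ V
      · have : z = xb := hVx z hzV hz
        subst this
        rw [dist_eq_norm]
        simpa [hnorm] using le_refl (t k * ‖u k‖)
      · have hzr : r ≤ dist z xb := by
          by_contra h
          exact hzV (hball (Metric.mem_ball.2 (lt_of_not_ge h))).2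
        have : dist z xb ≤ dist z (xb + t k • u k) + dist (xb + t k • u k) xb :=
          dist_triangle _ _ _
        have h2 : dist (xb + t k • u k) xb = t k * ‖u k‖ := by
          rw [dist_eq_norm]; simpa [hnorm]
        rw [dist_comm]
        linarith
    have hchain := le_trans hlb (le_trans (hsubreg _ hxU)
      (mul_le_mul_right hub _))
    rw [← ENNReal.ofReal_mul hκ.le] at hchain
    have hreal : t k * ‖u k‖ ≤ κ * (t k * ‖v k‖) :=
      (ENNReal.ofReal_le_ofReal_iff (by positivity)).1 hchain
    have : t k * ‖u k‖ ≤ t k * (κ * ‖v k‖) := by ring_nf; ring_nf at hreal; linarith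
    exact le_of_mul_le_mul_left (by linarith) htk
  have hlim2 : Tendsto (fun k => κ * ‖v k‖) atTop (nhds 0) := by
    have := hv.norm.const_mul κ
    simpa using this
  have : ‖w‖ ≤ 0 := le_of_tendsto_of_tendsto hu.norm hlim2 key
  exact norm_le_zero_iff.1 this
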